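/- Let S have size n ≥ 2 and let Ŝ^± be the set of reduced words of length B over S, so |Ŝ^±| = 2n̂ where n̂ = n(2n−1)^{B−1}. Let A be a λ-large b-automaton over Ŝ (with λ' = λ − 1/(2n) > 0) and let L_A be the set of reduced words over S of length divisible by B whose associated block-words lie in the language of A. Then for every L̂ ≥ 1, L_A contains at least ⌈λ'·2n̂⌉^{L̂−1} words of length B·L̂; consequently the I₀-growth rate of L_A is at least (λ')^{1/B}·(2n−1). -/

import Mathlib

/-- Letters over an alphabet of size `n`: a generator index together with a sign. -/
abbrev Letter (n : ℕ) := Fin n × Bool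

/-- The formal inverse of a letter. -/
def Letter.inv {n : ℕ} (s : Letter n) : Letter n := (s.1, !s.2)

/-- A word is reduced if no two consecutive letters are mutually inverse. -/
def Reduced {n : ℕ} (w : List (Letter n)) : Prop :=
  List.Chain' (fun s s' => s' ≠ s.inv) w

/-- The alphabet `Ŝ^±`: reduced words of length `B` over `S`. -/
def HatLetter (n B : ℕ) := {w : List (Letter n) // w.length = B ∧ Reduced w}

/-- A b-automaton over `Ŝ`: a starting set and transition sets of hat-letters. -/
def HatAut (n B : ℕ) := Set (HatLetter n B) × (HatLetter n B → Set (HatLetter n B))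

/-- Membership of a word over `Ŝ^±` in the language of a b-automaton over `Ŝ`. -/
def InLang {n B : ℕ} (A : HatAut n B) (w : List (HatLetter n B)) : Prop :=
  w ≠ [] ∧ (∀ a ∈ w.head?, a ∈ A.1) ∧ List.Chain' (fun s s' => s' ∈ A.2 s) w

/-- A b-automaton over `Ŝ` is `λ`-large if `σ_∅ ≠ ∅` and `|σ_ŝ| ≥ λ·2n̂` for
every `ŝ`, where `n̂ = n(2n-1)^(B-1)`. -/
def IsLarge {n B : ℕ} (lam : ℝ) (A : HatAut n B) : Prop :=
  A.1.Nonempty ∧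
    ∀ s : HatLetter n B, lam * (2 * (n * (2 * n - 1) ^ (B - 1))) ≤ (A.2 s).ncard

/-- `L_A`: the set of reduced words over `S` of length divisible by `B` whose
associated block-words lie in the language of `A`. -/
def LangA {n B : ℕ} (A : HatAut n B) : Set (List (Letter n)) :=
  {w | Reduced w ∧ ∃ wh : List (HatLetter n B),
    InLang A wh ∧ w = (wh.map Subtype.val).flatten}

lemma finite_subtype_length {α : Type*} [Finite α] {k : ℕ} {P : List α → Prop}
    (hP : ∀ l, P l → l.length = k) : Finite {l : List α // P l} := by
  refine Finite.of_injective (β := Fin k → α)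
    (fun a i => a.1.get (Fin.cast (hP a.1 a.2).symm i)) ?_
  intro a b h
  apply Subtype.ext
  apply List.ext_getElem (by rw [hP a.1 a.2, hP b.1 b.2])
  intro i h1 h2
  have hik : i < k := (hP a.1 a.2) ▸ h1
  simpa using congrFun h ⟨i, hik⟩

instance {n B : ℕ} : Finite (HatLetter n B) :=
  finite_subtype_length (k := B) (fun _ h => h.1)

lemma finite_length_eq (α : Type*) [Finite α] (k : ℕ) : {l : List α | l.length = k}.Finite := by
  rw [← Set.finite_coe_iff]
  exact finite_subtype_length (P := fun l => l ∈ {l : List α | l.length = k}) (fun _ h => h)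

def TList (n : ℕ) : ℕ → Letter n → Finset (List (Letter n))
  | 0, _ => {[]}
  | (k+1), f => ({f}ᶜ : Finset (Letter n)).biUnion (fun a => (TList n k a.inv).image (List.cons a))

lemma TList_card (n : ℕ) : ∀ (k : ℕ) (f : Letter n), (TList n k f).card ≤ (2*n-1)^k
  | 0, f => by simp [TList]
  | (k+1), f => by
    refine (Finset.card_biUnion_le).trans ?_
    calc ∑ a ∈ ({f}ᶜ : Finset (Letter n)), ((TList n k a.inv).image (List.cons a)).card
        ≤ ∑ _a ∈ ({f}ᶜ : Finset (Letter n)), (2*n-1)^k := by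
          refine Finset.sum_le_sum fun a _ => ?_
          exact (Finset.card_image_le).trans (TList_card n k a.inv)
      _ = (2*n-1)^(k+1) := by
          rw [Finset.sum_const, Finset.card_compl, Finset.card_singleton, smul_eq_mul]
          have : Fintype.card (Letter n) = 2*n := by simp [Fintype.card_prod, mul_comm]
          rw [this, pow_succ, mul_comm ((2*n-1)^k) _]

lemma mem_TList {n : ℕ} : ∀ (w : List (Letter n)) (f : Letter n), Reduced w →
    (∀ h ∈ w.head?, h ≠ f) → w ∈ TList n w.length f
  | [], f, _, _ => by simp [TList]
  | (a :: t), f, hred, hhead => by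
    have ha : a ≠ f := hhead a rfl
    have ht : t ∈ TList n t.length a.inv := by
      refine mem_TList t a.inv ?_ ?_
      · exact hred.tail
      · intro h hh
        cases t with
        | nil => simp at hh
        | cons b t' =>
          simp only [List.head?_cons, Option.mem_def, Option.some.injEq] at hh
          subst hh
          exact (List.isChain_cons_cons.mp hred).1
    show _ ∈ TList n (t.length + 1) f
    rw [TList, Finset.mem_biUnion]
    exact ⟨a, by simpa using ha, Finset.mem_image_of_mem _ ht⟩

/-- hat letters with given first letter -/
def badHead {n B : ℕ} (z : Letter n) : Set (HatLetter n B) :=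
  {a : HatLetter n B | (Subtype.val a).head? = some z}

lemma ncard_badHead {n B : ℕ} (hB : 1 ≤ B) (z : Letter n) :
    (badHead (B := B) z).ncard ≤ (2*n-1)^(B-1) := by
  classical
  set φ : HatLetter n B → List (Letter n) := fun a => (Subtype.val a).tail with hφ
  have hinj : Set.InjOn φ (badHead z) := by
    intro a ha b hb h
    apply Subtype.ext
    have ha' : Subtype.val a = z :: (Subtype.val a).tail := by
      cases hval : (Subtype.val a) with
      | nil => simp [badHead, hval] at ha
      | cons x xs => simp [badHead, hval] at ha ⊢; exact ha
    have hb' : Subtype.val b = z :: (Subtype.val b).tail := by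
      cases hval : (Subtype.val b) with
      | nil => simp [badHead, hval] at hb
      | cons x xs => simp [badHead, hval] at hb ⊢; exact hb
    rw [ha', hb']
    exact congrArg (z :: ·) h
  have hsub : φ '' (badHead z) ⊆ ↑(TList n (B-1) z.inv) := by
    rintro _ ⟨a, ha, rfl⟩
    have ha' : ∃ t, Subtype.val a = z :: t := by
      cases hval : (Subtype.val a) with
      | nil => simp [badHead, hval] at ha
      | cons x xs => simp [badHead, hval] at ha; exact ⟨xs, by rw [ha]⟩
    obtain ⟨t, ht⟩ := ha'
    have hlen : t.length = B - 1 := by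
      have := a.2.1; rw [ht] at this; simp at this; omega
    have hred : Reduced t := by
      have := a.2.2; rw [ht] at this; exact this.tail
    have hhead : ∀ h ∈ t.head?, h ≠ z.inv := by
      intro h hh
      cases t with
      | nil => simp at hh
      | cons b t' =>
        simp only [List.head?_cons, Option.mem_def, Option.some.injEq] at hh
        subst hh
        have := a.2.2; rw [ht] at this
        exact (List.isChain_cons_cons.mp this).1
    have := mem_TList t z.inv hred hhead
    rw [hlen] at this
    simpa [φ, ht] using this
  calc (badHead (B := B) z).ncard = (φ '' (badHead z)).ncard :=
        (Set.ncard_image_of_injOn hinj).symm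
    _ ≤ (↑(TList n (B-1) z.inv) : Set (List (Letter n))).ncard :=
        Set.ncard_le_ncard hsub (Set.toFinite _)
    _ = (TList n (B-1) z.inv).card := Set.ncard_coe_finset _
    _ ≤ (2*n-1)^(B-1) := TList_card n _ _

lemma good_card {n B : ℕ} (hn : 2 ≤ n) (hB : 1 ≤ B) {lam lam' : ℝ}
    (hlam' : lam' = lam - 1 / (2 * n)) {A : HatAut n B} (hA : IsLarge lam A)
    (s : HatLetter n B) (z : Letter n) :
    ⌈lam' * (2 * (n * (2 * n - 1) ^ (B - 1)))⌉₊ ≤ (A.2 s \ badHead z).ncard := by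
  rw [Nat.ceil_le]
  have h1 : (A.2 s).ncard ≤ (A.2 s \ badHead z).ncard + (badHead (B := B) z).ncard :=
    Set.ncard_le_ncard_diff_add_ncard _ _ (Set.toFinite _)
  have h2 := ncard_badHead (n := n) hB z
  have h3 := hA.2 s
  have hcast : (((2*n-1)^(B-1) : ℕ) : ℝ) = ((2*(n:ℝ)-1))^(B-1) := by
    push_cast [Nat.cast_sub (by omega : 1 ≤ 2*n)]
    ring_nf
  have hn0 : (n : ℝ) ≠ 0 := by
    have : (0:ℝ) < n := by exact_mod_cast (by omega : 0 < n)
    linarith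
  have key : lam' * (2 * (n * (2 * n - 1) ^ (B - 1)))
      = lam * (2 * ((n:ℝ) * (2 * n - 1) ^ (B - 1))) - (2*(n:ℝ)-1)^(B-1) := by
    rw [hlam']
    field_simp
  rw [key]
  have h1' : ((A.2 s).ncard : ℝ) ≤ ((A.2 s \ badHead z).ncard : ℝ)
      + ((badHead (B := B) z).ncard : ℝ) := by exact_mod_cast h1
  have h2' : ((badHead (B := B) z).ncard : ℝ) ≤ (2*(n:ℝ)-1)^(B-1) := by
    calc ((badHead (B := B) z).ncard : ℝ) ≤ (((2*n-1)^(B-1) : ℕ) : ℝ) := by exact_mod_cast h2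
      _ = _ := hcast
  linarith

lemma exists_inj_of_le_ncard {α : Type*} {s : Set α} (hs : s.Finite) {m : ℕ}
    (h : m ≤ s.ncard) : ∃ f : Fin m → α, Function.Injective f ∧ ∀ c, f c ∈ s := by
  classical
  rw [Set.ncard_eq_toFinset_card _ hs] at h
  obtain ⟨t, hts, htc⟩ := Finset.exists_subset_card_eq h
  have e : Fin m ≃ {x // x ∈ t} := (finCongr htc.symm).trans (Finset.equivFin t).symm
  refine ⟨fun c => (e c).val, ?_, fun c => ?_⟩
  · intro c c' hcc
    exact e.injective (Subtype.ext hcc)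
  · exact (Set.Finite.mem_toFinset hs).mp (hts (e c).2)


def buildW {n B m : ℕ} (a₀ : HatLetter n B) (dz : Letter n)
    (ext : HatLetter n B → Letter n → Fin m → HatLetter n B) :
    List (Fin m) → List (HatLetter n B)
  | [] => [a₀]
  | c :: cs =>
      let p := buildW a₀ dz ext cs
      p ++ [ext (p.getLastD a₀) (((p.map Subtype.val).flatten).getLastD dz) c]

lemma buildW_length {n B m : ℕ} (a₀ : HatLetter n B) (dz : Letter n)
    (ext : HatLetter n B → Letter n → Fin m → HatLetter n B) :
    ∀ cs : List (Fin m), (buildW a₀ dz ext cs).length = cs.length + 1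
  | [] => rfl
  | c :: cs => by
    simp [buildW, buildW_length a₀ dz ext cs]

lemma buildW_inj {n B m : ℕ} (a₀ : HatLetter n B) (dz : Letter n)
    (ext : HatLetter n B → Letter n → Fin m → HatLetter n B)
    (hext : ∀ s z, Function.Injective (ext s z)) :
    ∀ cs cs' : List (Fin m), cs.length = cs'.length →
      buildW a₀ dz ext cs = buildW a₀ dz ext cs' → cs = cs'
  | [], [], _, _ => rfl
  | [], c' :: cs', hlen, _ => by simp at hlen
  | c :: cs, [], hlen, _ => by simp at hlen
  | c :: cs, c' :: cs', hlen, heq => by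
    simp only [buildW] at heq
    have hlen' : cs.length = cs'.length := by simpa using hlen
    have hplen : (buildW a₀ dz ext cs).length = (buildW a₀ dz ext cs').length := by
      rw [buildW_length, buildW_length, hlen']
    obtain ⟨hp, he⟩ := List.append_inj heq hplen
    have hcs : cs = cs' := buildW_inj a₀ dz ext hext cs cs' hlen' hp
    subst hcs
    have : c = c' := hext _ _ (List.singleton_injective he)
    rw [this]

lemma flat_length {n B : ℕ} : ∀ p : List (HatLetter n B),
    ((p.map Subtype.val).flatten).length = B * p.length
  | [] => by simp; rfl
  | a :: p => by
    erw [List.map_cons, List.flatten_cons, List.length_append, a.2.1, flat_length p,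
      List.length_cons, Nat.mul_succ, Nat.add_comm]

lemma buildW_spec {n B m : ℕ} (hB : 1 ≤ B) {A : HatAut n B} (a₀ : HatLetter n B)
    (dz : Letter n) (ext : HatLetter n B → Letter n → Fin m → HatLetter n B)
    (ha₀ : a₀ ∈ A.1)
    (hext : ∀ s z c, ext s z c ∈ A.2 s ∧ (Subtype.val (ext s z c)).head? ≠ some z.inv) :
    ∀ cs : List (Fin m), InLang A (buildW a₀ dz ext cs) ∧
      Reduced (((buildW a₀ dz ext cs).map Subtype.val).flatten)
  | [] => by
    refine ⟨⟨by simp [buildW], ?_, ?_⟩, ?_⟩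
    · intro a ha
      simp [buildW] at ha
      rwa [← ha]
    · exact List.isChain_singleton a₀
    · change Reduced (a₀.1 ++ []); rw [List.append_nil]; exact a₀.2.2
  | c :: cs => by
    obtain ⟨hin, hred⟩ := buildW_spec hB a₀ dz ext ha₀ hext cs
    set p := buildW a₀ dz ext cs with hp
    set a := ext (p.getLastD a₀) (((p.map Subtype.val).flatten).getLastD dz) c with hadef
    have hpne : p ≠ [] := hin.1
    have hlenf : ((p.map Subtype.val).flatten).length = B * p.length := flat_length p
    have hflatne : (p.map Subtype.val).flatten ≠ [] := by
      intro hcon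
      rw [hcon] at hlenf
      have h2 : 0 < B * p.length := Nat.mul_pos (by omega) (List.length_pos_iff.mpr hpne)
      simp only [List.length_nil] at hlenf
      omega
    have hbw : buildW a₀ dz ext (c :: cs) = p ++ [a] := rfl
    rw [hbw]
    constructor
    · refine ⟨by simp, ?_, ?_⟩
      · intro x hx
        rw [List.head?_append_of_ne_nil _ hpne] at hx
        exact hin.2.1 x hx
      · refine List.isChain_append.mpr ⟨hin.2.2, List.isChain_singleton a, ?_⟩
        intro x hx y hy
        simp only [List.head?_cons, Option.mem_def, Option.some.injEq] at hy
        subst hy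
        have hx2 : p.getLast? = some x := hx
        have hx' : p.getLastD a₀ = x := by rw [List.getLastD_eq_getLast?, hx2]; rfl
        rw [← hx']
        exact (hext _ _ c).1
    · have hfl : ((p ++ [a]).map Subtype.val).flatten
          = (p.map Subtype.val).flatten ++ Subtype.val a := by
        erw [List.map_append, List.flatten_append, List.map_singleton, List.flatten_singleton]
      rw [hfl]
      unfold Reduced
      refine List.isChain_append.mpr ⟨hred, a.2.2, ?_⟩
      intro x hx y hy
      have hx2 : ((p.map Subtype.val).flatten).getLast? = some x := hx
      have hz : ((p.map Subtype.val).flatten).getLastD dz = x := by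
        rw [List.getLastD_eq_getLast?, hx2]; rfl
      have hy2 : (Subtype.val a).head? = some y := hy
      have h5 : (Subtype.val a).head?
          ≠ some ((((p.map Subtype.val).flatten).getLastD dz).inv) :=
        (hext (p.getLastD a₀) (((p.map Subtype.val).flatten).getLastD dz) c).2
      intro hcon
      apply h5
      rw [hy2, hcon, hz]

lemma flatten_inj {α : Type*} {B : ℕ} (hB : 1 ≤ B) :
    ∀ l1 l2 : List (List α), (∀ b ∈ l1, b.length = B) → (∀ b ∈ l2, b.length = B) →
      l1.flatten = l2.flatten → l1 = l2
  | [], [], _, _, _ => rfl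
  | [], b :: l2, _, h2, h => by
    exfalso
    have hb : b.length = B := h2 b (by simp)
    rw [List.flatten_nil, List.flatten_cons] at h
    have := List.append_eq_nil_iff.mp h.symm
    rw [this.1] at hb
    simp at hb
    omega
  | b :: l1, [], h1, _, h => by
    exfalso
    have hb : b.length = B := h1 b (by simp)
    rw [List.flatten_nil, List.flatten_cons] at h
    have := List.append_eq_nil_iff.mp h
    rw [this.1] at hb
    simp at hb
    omega
  | b1 :: l1, b2 :: l2, h1, h2, h => by
    rw [List.flatten_cons, List.flatten_cons] at h
    have hlen : b1.length = b2.length := by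
      rw [h1 b1 (by simp), h2 b2 (by simp)]
    obtain ⟨hb, hf⟩ := List.append_inj h hlen
    have := flatten_inj hB l1 l2 (fun b hb => h1 b (by simp [hb])) (fun b hb => h2 b (by simp [hb])) hf
    rw [hb, this]

lemma main_count {n B : ℕ} (hn : 2 ≤ n) (hB : 1 ≤ B) {lam lam' : ℝ}
    (hlam' : lam' = lam - 1 / (2 * n)) {A : HatAut n B} (hA : IsLarge lam A) :
    ∀ Lh : ℕ, 1 ≤ Lh →
      ⌈lam' * (2 * (n * (2 * n - 1) ^ (B - 1)))⌉₊ ^ (Lh - 1) ≤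
        {w ∈ LangA A | w.length = B * Lh}.ncard := by
  intro Lh hLh
  classical
  set m := ⌈lam' * (2 * (n * (2 * n - 1) ^ (B - 1)))⌉₊ with hm
  obtain ⟨a₀, ha₀⟩ := hA.1
  have hchoice : ∀ (s : HatLetter n B) (z : Letter n),
      ∃ f : Fin m → HatLetter n B, Function.Injective f ∧
        ∀ c, f c ∈ A.2 s \ badHead z.inv :=
    fun s z => exists_inj_of_le_ncard (Set.toFinite _) (good_card hn hB hlam' hA s z.inv)
  choose ext hextinj hextmem using hchoice
  have hext : ∀ s z c, ext s z c ∈ A.2 s ∧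
      (Subtype.val (ext s z c)).head? ≠ some z.inv := by
    intro s z c
    refine ⟨(hextmem s z c).1, fun hcon => (hextmem s z c).2 hcon⟩
  have hn0 : 0 < n := by omega
  set dz : Letter n := (⟨0, hn0⟩, true) with hdz
  set F : (Fin (Lh - 1) → Fin m) → List (Letter n) :=
    fun f => (((buildW a₀ dz ext (List.ofFn f)).map Subtype.val).flatten) with hF
  have hFinj : Function.Injective F := by
    intro f g hfg
    have h1 : (buildW a₀ dz ext (List.ofFn f)).map Subtype.val
        = (buildW a₀ dz ext (List.ofFn g)).map Subtype.val := by
      refine flatten_inj hB _ _ ?_ ?_ hfg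
      · rintro b hb
        obtain ⟨x, _, rfl⟩ := List.mem_map.mp hb
        exact x.2.1
      · rintro b hb
        obtain ⟨x, _, rfl⟩ := List.mem_map.mp hb
        exact x.2.1
    have h2 : buildW a₀ dz ext (List.ofFn f) = buildW a₀ dz ext (List.ofFn g) :=
      (List.map_injective_iff.mpr Subtype.val_injective) h1
    have h3 := buildW_inj a₀ dz ext hextinj _ _ (by simp) h2
    exact List.ofFn_inj.mp h3
  have hsub : Set.range F ⊆ {w ∈ LangA A | w.length = B * Lh} := by
    rintro _ ⟨f, rfl⟩
    obtain ⟨hin, hred⟩ := buildW_spec hB a₀ dz ext ha₀ hext (List.ofFn f)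
    refine ⟨⟨hred, buildW a₀ dz ext (List.ofFn f), hin, rfl⟩, ?_⟩
    show (((buildW a₀ dz ext (List.ofFn f)).map Subtype.val).flatten).length = B * Lh
    rw [flat_length, buildW_length]
    rw [List.length_ofFn]
    congr 1
    omega
  have hfin : {w ∈ LangA A | w.length = B * Lh}.Finite :=
    (finite_length_eq (Letter n) (B*Lh)).subset (fun w hw => hw.2)
  have hcard : (Set.range F).ncard = m ^ (Lh - 1) := by
    rw [← Set.image_univ, Set.ncard_image_of_injective _ hFinj, Set.ncard_univ,
      Nat.card_eq_fintype_card, Fintype.card_fun]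
    simp
  calc m ^ (Lh-1) = (Set.range F).ncard := hcard.symm
    _ ≤ _ := Set.ncard_le_ncard hsub hfin

/-- For a `λ`-large b-automaton `A` over `Ŝ` with `λ' = λ - 1/(2n) > 0`, the set
`L_A` contains at least `⌈λ'·2n̂⌉^(Lh-1)` words of length `B·Lh` for each `Lh ≥ 1`;
consequently its `I₀`-growth rate is at least `(λ')^{1/B}·(2n-1)`. -/
theorem stmt_13 {n B : ℕ} (hn : 2 ≤ n) (hB : 1 ≤ B)
    (lam lam' : ℝ) (hlam' : lam' = lam - 1 / (2 * n)) (hpos : 0 < lam')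
    (A : HatAut n B) (hA : IsLarge lam A) :
    (∀ Lh : ℕ, 1 ≤ Lh →
      ⌈lam' * (2 * (n * (2 * n - 1) ^ (B - 1)))⌉₊ ^ (Lh - 1) ≤
        {w ∈ LangA A | w.length = B * Lh}.ncard) ∧
    ∃ c : ℝ, 0 < c ∧ ∀ Lh : ℕ, 1 ≤ Lh →
      c * ((lam' ^ ((1:ℝ) / B)) * (2 * n - 1)) ^ (B * Lh) ≤
        ({w ∈ LangA A | w.length = B * Lh}.ncard : ℝ) := by
  have part1 := main_count hn hB hlam' hA
  refine ⟨part1, ?_⟩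
  set X : ℝ := (lam' ^ ((1:ℝ)/B)) * (2*(n:ℝ) - 1) with hX
  have hB0 : (B:ℝ) ≠ 0 := Nat.cast_ne_zero.mpr (by omega)
  have h2n : (0:ℝ) < 2*(n:ℝ) - 1 := by
    have : (2:ℝ) ≤ (n:ℝ) := by exact_mod_cast hn
    linarith
  have hXpos : 0 < X := mul_pos (Real.rpow_pos_of_pos hpos _) h2n
  have hXBpos : 0 < X ^ B := pow_pos hXpos B
  have hrpow : (lam' ^ ((1:ℝ)/B)) ^ B = lam' := by
    rw [← Real.rpow_natCast (lam' ^ ((1:ℝ)/B)) B, ← Real.rpow_mul hpos.le]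
    rw [one_div, inv_mul_cancel₀ hB0, Real.rpow_one]
  have hXB : X ^ B = lam' * (2*(n:ℝ)-1)^B := by
    rw [hX, mul_pow, hrpow]
  set m := ⌈lam' * (2 * (n * (2 * n - 1) ^ (B - 1)))⌉₊ with hm
  have hkey : X ^ B ≤ (m:ℝ) := by
    have h1 : lam' * (2 * ((n:ℝ) * (2*(n:ℝ)-1)^(B-1))) ≤ m := Nat.le_ceil _
    have h2 : (2*(n:ℝ)-1)^B ≤ 2 * ((n:ℝ) * (2*(n:ℝ)-1)^(B-1)) := by
      have hpB : (2*(n:ℝ)-1)^B = (2*(n:ℝ)-1) * (2*(n:ℝ)-1)^(B-1) := by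
        rw [← pow_succ']
        congr 1
        omega
      have hPnn : (0:ℝ) ≤ (2*(n:ℝ)-1)^(B-1) := by positivity
      rw [hpB]
      nlinarith
    calc X^B = lam' * (2*(n:ℝ)-1)^B := hXB
      _ ≤ lam' * (2 * ((n:ℝ) * (2*(n:ℝ)-1)^(B-1))) := by
          exact mul_le_mul_of_nonneg_left h2 hpos.le
      _ ≤ m := h1
  refine ⟨1 / X^B, by positivity, ?_⟩
  intro Lh hLh
  have hcount := part1 Lh hLh
  have hcount' : ((m:ℝ)) ^ (Lh-1) ≤ ({w ∈ LangA A | w.length = B * Lh}.ncard : ℝ) := by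
    exact_mod_cast hcount
  have hmul : B * Lh = B * (Lh - 1) + B := by
    calc B * Lh = B * (Lh - 1 + 1) := by rw [Nat.sub_add_cancel hLh]
      _ = B * (Lh-1) + B := by rw [Nat.mul_succ]
  have heq : (1 / X^B) * X ^ (B*Lh) = (X^B) ^ (Lh - 1) := by
    rw [hmul, pow_add, pow_mul]
    field_simp
  rw [heq]
  calc (X^B)^(Lh-1) ≤ ((m:ℝ))^(Lh-1) := pow_le_pow_left₀ hXBpos.le hkey _
    _ ≤ _ := hcount'
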